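/- The minimal set of Shannon inequalities has size n + n(n-1)·2^{n-3} for n ≥ 3: every monotonicity inequality H(X_{S∖T}) ≤ H(X_S) and submodularity inequality H(X_{S∩T}) + H(X_{S∪T}) ≤ H(X_S) + H(X_T) is a nonnegative linear combination of the n 'elemental' monotonicities H(X_{Ω∖{i}}) ≤ H(X_Ω) and the elemental submodularities I(X_i : X_j | X_U) ≥ 0 with i < j and U ⊆ Ω∖{i,j}. -/

import Mathlib

open Finset

/-- Probability that the random variable `X` takes value `x`, for weights `μ`. -/
noncomputable def prob {Ω α : Type} [Fintype Ω] [Fintype α] [DecidableEq α]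
    (μ : Ω → ℝ) (X : Ω → α) (x : α) : ℝ :=
  ∑ ω, if X ω = x then μ ω else 0

/-- Shannon entropy (base 2) of a finite discrete random variable,
with the convention `0 * log₂ 0 = 0` (since `Real.logb 2 0 = 0`). -/
noncomputable def ent {Ω α : Type} [Fintype Ω] [Fintype α] [DecidableEq α]
    (μ : Ω → ℝ) (X : Ω → α) : ℝ :=
  -∑ x, prob μ X x * Real.logb 2 (prob μ X x)

/-- `μ` is a probability mass function on the finite sample space `Ω`. -/
def IsPMF {Ω : Type} [Fintype Ω] (μ : Ω → ℝ) : Prop :=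
  (∀ ω, 0 ≤ μ ω) ∧ ∑ ω, μ ω = 1

/-- Mutual information `I(X:Y) = H(X) + H(Y) - H(X,Y)`. -/
noncomputable def mutualInfo {Ω α β : Type} [Fintype Ω] [Fintype α] [Fintype β]
    [DecidableEq α] [DecidableEq β] (μ : Ω → ℝ) (X : Ω → α) (Y : Ω → β) : ℝ :=
  ent μ X + ent μ Y - ent μ (fun ω => (X ω, Y ω))

/-- Conditional mutual information
`I(X:Y|Z) = H(X,Z) + H(Y,Z) - H(Z) - H(X,Y,Z)`. -/
noncomputable def condMutualInfo {Ω α β γ : Type} [Fintype Ω] [Fintype α] [Fintype β]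
    [Fintype γ] [DecidableEq α] [DecidableEq β] [DecidableEq γ]
    (μ : Ω → ℝ) (X : Ω → α) (Y : Ω → β) (Z : Ω → γ) : ℝ :=
  ent μ (fun ω => (X ω, Z ω)) + ent μ (fun ω => (Y ω, Z ω)) - ent μ Z
    - ent μ (fun ω => (X ω, Y ω, Z ω))

/-- Conditional entropy `H(X|Y) = H(X,Y) - H(Y)`. -/
noncomputable def condEnt {Ω α β : Type} [Fintype Ω] [Fintype α] [Fintype β]
    [DecidableEq α] [DecidableEq β] (μ : Ω → ℝ) (X : Ω → α) (Y : Ω → β) : ℝ :=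
  ent μ (fun ω => (X ω, Y ω)) - ent μ Y




section Aux
variable {n : ℕ} (v : Finset (Fin n) → ℝ)

/-- The abstract conditional mutual information functional. -/
noncomputable def Fv (A B C : Finset (Fin n)) : ℝ :=
  v (A ∪ C) + v (B ∪ C) - v C - v (A ∪ B ∪ C)

lemma Fv_symm (A B C : Finset (Fin n)) : Fv v A B C = Fv v B A C := by
  unfold Fv
  rw [show A ∪ B ∪ C = B ∪ A ∪ C by rw [union_comm A B]]
  ring

lemma Fv_splitA {A B C : Finset (Fin n)} {a : Fin n} (ha : a ∈ A) (haC : a ∉ C) :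
    Fv v A B C = Fv v {a} B C + Fv v (A.erase a) B (insert a C) := by
  unfold Fv
  have h1 : ({a} : Finset (Fin n)) ∪ C = insert a C := by
    ext x; simp [or_comm]
  have h2 : A.erase a ∪ insert a C = A ∪ C := by
    ext x; by_cases hx : x = a <;> simp [hx, mem_erase, ha] <;> tauto
  have h3 : ({a} : Finset (Fin n)) ∪ B ∪ C = insert a (B ∪ C) := by
    ext x; simp [or_comm, or_assoc]
  have h4 : A.erase a ∪ B ∪ insert a C = A ∪ B ∪ C := by
    ext x; by_cases hx : x = a <;> simp [hx, mem_erase, ha] <;> tauto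
  have h5 : B ∪ insert a C = insert a (B ∪ C) := by
    ext x; simp; try tauto
  rw [h1, h2, h3, h4, h5]
  ring

lemma Fv_splitB {A B C : Finset (Fin n)} {b : Fin n} (hb : b ∈ B) (hbC : b ∉ C) :
    Fv v A B C = Fv v A {b} C + Fv v A (B.erase b) (insert b C) := by
  rw [Fv_symm, Fv_splitA v hb hbC, Fv_symm v {b}, Fv_symm v (B.erase b)]

lemma Fv_nonneg
    (hsub : ∀ i j : Fin n, i < j → ∀ U : Finset (Fin n), i ∉ U → j ∉ U →
      0 ≤ v (insert i U) + v (insert j U) - v U - v (insert i (insert j U)))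
    : ∀ m (A B C : Finset (Fin n)), A.card + B.card ≤ m →
      Disjoint A B → Disjoint A C → Disjoint B C → 0 ≤ Fv v A B C := by
  have base : ∀ (a b : Fin n) (C : Finset (Fin n)), a ≠ b → a ∉ C → b ∉ C →
      0 ≤ Fv v {a} {b} C := by
    intro a b C hab haC hbC
    have h1 : ({a} : Finset (Fin n)) ∪ C = insert a C := by ext x; simp [or_comm]
    have h2 : ({b} : Finset (Fin n)) ∪ C = insert b C := by ext x; simp [or_comm]
    have h3 : ({a} : Finset (Fin n)) ∪ {b} ∪ C = insert a (insert b C) := by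
      ext x; simp; try tauto
    unfold Fv
    rw [h1, h2, h3]
    rcases lt_or_gt_of_ne hab with h | h
    · exact hsub a b h C haC hbC
    · have := hsub b a h C hbC haC
      have h4 : insert b (insert a C) = insert a (insert b C) := Finset.insert_comm b a C
      rw [h4] at this
      linarith
  intro m
  induction m with
  | zero =>
    intro A B C hm _ _ _
    have hA : A = ∅ := card_eq_zero.mp (by omega)
    subst hA
    simp [Fv]
  | succ m ih =>
    intro A B C hm hAB hAC hBC
    rcases A.eq_empty_or_nonempty with rfl | ⟨a, ha⟩
    · simp [Fv]
    rcases B.eq_empty_or_nonempty with rfl | ⟨b, hb⟩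
    · simp [Fv]
    have haC : a ∉ C := fun h => (disjoint_left.mp hAC ha) h
    have hbC : b ∉ C := fun h => (disjoint_left.mp hBC hb) h
    have hab : a ≠ b := fun h => (disjoint_left.mp hAB ha) (h ▸ hb)
    have haB : a ∉ B := fun h => (disjoint_left.mp hAB ha) h
    have hbA : b ∉ A := fun h => (disjoint_left.mp hAB h) hb
    rw [Fv_splitA v ha haC]
    have hrec : 0 ≤ Fv v (A.erase a) B (insert a C) := by
      apply ih
      · have := card_erase_of_mem ha
        have hA1 : 1 ≤ A.card := card_pos.mpr ⟨a, ha⟩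
        omega
      · exact disjoint_of_subset_left (erase_subset a A) hAB
      · refine disjoint_left.mpr fun x hx hx' => ?_
        rcases mem_insert.mp hx' with rfl | hx'
        · exact (notMem_erase x A) hx
        · exact (disjoint_left.mp hAC (mem_of_mem_erase hx)) hx'
      · refine disjoint_left.mpr fun x hx hx' => ?_
        rcases mem_insert.mp hx' with rfl | hx'
        · exact haB hx
        · exact (disjoint_left.mp hBC hx) hx'
    have hsingle : 0 ≤ Fv v {a} B C := by
      rw [Fv_splitB v hb hbC]
      have h1 : 0 ≤ Fv v {a} {b} C := base a b C hab haC hbC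
      have h2 : 0 ≤ Fv v {a} (B.erase b) (insert b C) := by
        apply ih
        · have := card_erase_of_mem hb
          have hB1 : 1 ≤ B.card := card_pos.mpr ⟨b, hb⟩
          have hA1 : 1 ≤ A.card := card_pos.mpr ⟨a, ha⟩
          simp only [card_singleton]
          omega
        · exact disjoint_singleton_left.mpr fun h => haB (mem_of_mem_erase h)
        · refine disjoint_singleton_left.mpr fun h => ?_
          rcases mem_insert.mp h with h | h
          · exact hab h
          · exact haC h
        · refine disjoint_left.mpr fun x hx hx' => ?_
          rcases mem_insert.mp hx' with rfl | hx'
          · exact (notMem_erase x B) hx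
          · exact (disjoint_left.mp hBC (mem_of_mem_erase hx)) hx'
      linarith
    linarith

end Aux

section Mono
variable {n : ℕ} {v : Finset (Fin n) → ℝ}

lemma mono_insert
    (hmono : ∀ i : Fin n, v (Finset.univ.erase i) ≤ v Finset.univ)
    (hsub : ∀ i j : Fin n, i < j → ∀ U : Finset (Fin n), i ∉ U → j ∉ U →
      0 ≤ v (insert i U) + v (insert j U) - v U - v (insert i (insert j U)))
    (A : Finset (Fin n)) (k : Fin n) (hk : k ∉ A) : v A ≤ v (insert k A) := by
  set A₀ := (univ : Finset (Fin n)) \ insert k A with hA₀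
  have hd1 : Disjoint A₀ {k} := by
    refine disjoint_singleton_right.mpr fun h => ?_
    simp [hA₀] at h
  have hd2 : Disjoint A₀ A := by
    refine disjoint_left.mpr fun x hx hx' => ?_
    simp [hA₀] at hx
    exact hx.2 hx'
  have hd3 : Disjoint ({k} : Finset (Fin n)) A := disjoint_singleton_left.mpr hk
  have h := Fv_nonneg v hsub (A₀.card + 1) A₀ {k} A (by simp) hd1 hd2 hd3
  unfold Fv at h
  have e1 : A₀ ∪ A = univ.erase k := by
    ext x; by_cases hx : x = k <;> simp [hA₀, hx, hk] <;> tauto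
  have e2 : ({k} : Finset (Fin n)) ∪ A = insert k A := by
    ext x; simp [or_comm]
  have e3 : A₀ ∪ {k} ∪ A = univ := by
    ext x; by_cases hx : x = k <;> simp [hA₀, hx] <;> tauto
  rw [e1, e2, e3] at h
  have := hmono k
  linarith

lemma mono_subset
    (hmono : ∀ i : Fin n, v (Finset.univ.erase i) ≤ v Finset.univ)
    (hsub : ∀ i j : Fin n, i < j → ∀ U : Finset (Fin n), i ∉ U → j ∉ U →
      0 ≤ v (insert i U) + v (insert j U) - v U - v (insert i (insert j U))) :
    ∀ m (A B : Finset (Fin n)), A ⊆ B → (B \ A).card ≤ m → v A ≤ v B := by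
  intro m
  induction m with
  | zero =>
    intro A B hAB hm
    have : B \ A = ∅ := card_eq_zero.mp (by omega)
    have : A = B := subset_antisymm hAB (fun x hx => by
      by_contra hxA
      exact absurd (mem_sdiff.mpr ⟨hx, hxA⟩) (by simp [this]))
    rw [this]
  | succ m ih =>
    intro A B hAB hm
    rcases (B \ A).eq_empty_or_nonempty with he | ⟨k, hk⟩
    · have : A = B := subset_antisymm hAB (fun x hx => by
        by_contra hxA
        exact absurd (mem_sdiff.mpr ⟨hx, hxA⟩) (by simp [he]))
      rw [this]
    · have hkB : k ∈ B := (mem_sdiff.mp hk).1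
      have hkA : k ∉ A := (mem_sdiff.mp hk).2
      have step := mono_insert hmono hsub A k hkA
      have hsub' : insert k A ⊆ B := insert_subset hkB hAB
      have hcard : (B \ insert k A).card ≤ m := by
        have : B \ insert k A = (B \ A).erase k := by
          ext x; simp [mem_sdiff, mem_erase]; tauto
        rw [this, card_erase_of_mem hk]
        omega
      exact le_trans step (ih (insert k A) B hsub' hcard)

end Mono

theorem elemental_shannon_inequalities_aux {n : ℕ} (hn : 3 ≤ n) :
    (n + ((Finset.univ.filter (fun p : Fin n × Fin n => p.1 < p.2)).card) * 2 ^ (n - 2)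
        = n + n * (n - 1) * 2 ^ (n - 3)) ∧
    (∀ v : Finset (Fin n) → ℝ, v ∅ = 0 →
      (∀ i : Fin n, v (Finset.univ.erase i) ≤ v Finset.univ) →
      (∀ i j : Fin n, i < j → ∀ U : Finset (Fin n), i ∉ U → j ∉ U →
        0 ≤ v (insert i U) + v (insert j U) - v U - v (insert i (insert j U))) →
      (∀ S T : Finset (Fin n), v (S \ T) ≤ v S) ∧
      (∀ S T : Finset (Fin n), v (S ∩ T) + v (S ∪ T) ≤ v S + v T)) := by
  constructor
  · -- counting
    have hc : (Finset.univ.filter (fun p : Fin n × Fin n => p.1 < p.2)).card * 2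
        = n * (n - 1) := by
      rw [Finset.card_filter]
      rw [Fintype.sum_prod_type_right]
      have hinner : ∀ j : Fin n, (∑ i : Fin n, if i < j then 1 else 0) = (j : ℕ) := by
        intro j
        rw [← Finset.card_filter]
        have : (univ.filter (fun i : Fin n => i < j)) = Finset.Iio j := by
          ext x; simp
        rw [this, Fin.card_Iio]
      simp_rw [hinner]
      rw [Fin.sum_univ_eq_sum_range (fun k => k)]
      exact Finset.sum_range_id_mul_two n
    have hp : 2 ^ (n - 2) = 2 * 2 ^ (n - 3) := by
      have : n - 2 = (n - 3) + 1 := by omega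
      rw [this, pow_succ]; ring
    rw [hp]
    have : (Finset.univ.filter (fun p : Fin n × Fin n => p.1 < p.2)).card * (2 * 2 ^ (n - 3))
        = ((Finset.univ.filter (fun p : Fin n × Fin n => p.1 < p.2)).card * 2) * 2 ^ (n - 3) := by
      ring
    rw [this, hc]
  · intro v _ hmono hsub
    constructor
    · intro S T
      exact mono_subset hmono hsub S.card (S \ T) S sdiff_subset
        (card_le_card sdiff_subset)
    · intro S T
      have hd1 : Disjoint (S \ T) (T \ S) := disjoint_sdiff_sdiff
      have hd2 : Disjoint (S \ T) (S ∩ T) := by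
        refine disjoint_left.mpr fun x hx hx' => ?_
        simp [mem_sdiff, mem_inter] at hx hx'
        exact hx.2 hx'.2
      have hd3 : Disjoint (T \ S) (S ∩ T) := by
        refine disjoint_left.mpr fun x hx hx' => ?_
        simp [mem_sdiff, mem_inter] at hx hx'
        exact hx.2 hx'.1
      have h := Fv_nonneg v hsub ((S \ T).card + (T \ S).card) (S \ T) (T \ S) (S ∩ T)
        le_rfl hd1 hd2 hd3
      unfold Fv at h
      have e1 : S \ T ∪ S ∩ T = S := by ext x; simp; tauto
      have e2 : T \ S ∪ S ∩ T = T := by ext x; simp; tauto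
      have e3 : (S \ T ∪ T \ S) ∪ S ∩ T = S ∪ T := by ext x; simp; tauto
      rw [e1, e2, e3] at h
      linarith


/-- The elemental Shannon inequalities: (i) there are
n + n(n-1)·2^(n-3) of them for n ≥ 3, and (ii) every monotonicity inequality
v(S\T) ≤ v(S) and submodularity inequality v(S∩T) + v(S∪T) ≤ v(S) + v(T)
follows from the n elemental monotonicities v(Ω\{i}) ≤ v(Ω) together with the
elemental submodularities I(Xᵢ:Xⱼ|X_U) ≥ 0 (i < j, U ⊆ Ω\{i,j}). -/
theorem elemental_shannon_inequalities {n : ℕ} (hn : 3 ≤ n) :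
    (n + ((Finset.univ.filter (fun p : Fin n × Fin n => p.1 < p.2)).card) * 2 ^ (n - 2)
        = n + n * (n - 1) * 2 ^ (n - 3)) ∧
    (∀ v : Finset (Fin n) → ℝ, v ∅ = 0 →
      (∀ i : Fin n, v (Finset.univ.erase i) ≤ v Finset.univ) →
      (∀ i j : Fin n, i < j → ∀ U : Finset (Fin n), i ∉ U → j ∉ U →
        0 ≤ v (insert i U) + v (insert j U) - v U - v (insert i (insert j U))) →
      (∀ S T : Finset (Fin n), v (S \ T) ≤ v S) ∧
      (∀ S T : Finset (Fin n), v (S ∩ T) + v (S ∪ T) ≤ v S + v T)) :=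
  elemental_shannon_inequalities_aux hn
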